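/- arXiv:1612.01872 — 3 statements merged into one kernel-verified Lean document; each statement's English description precedes it below -/
import Mathlib

section
/- Let X_1, X_2, ..., X_N be random variables on a probability space taking values in a countable set Ω = S ∪ {0}, and suppose X_1 ∈ S almost surely. Fix states x_1, ..., x_N with x_n ∈ S and suppose P(X_k = x_k) > 0 and P(X_k ∈ S) > 0 for all k ≤ n. Define w_1 = 1 and, for 1 < k ≤ n, the incremental weight w̃_k = [P(X_k = x_k | X_k ∈ S) / P(X_k = x_k)] · [P(X_{k-1} = x_{k-1}) / P(X_{k-1} = x_{k-1} | X_{k-1} ∈ S)], and set w_n = ∏_{k=2}^n w̃_k. Then w_n = 1 / P(X_n ∈ S). -/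
open MeasureTheory Finset

/-- In the SMC sampler for LCDs with the bootstrap forward kernel and optimal
backward kernel, the unnormalized importance weight of a non-absorbed particle
at time `t_n` equals `1 / P(X(t_n) ∈ S)`. -/
theorem smc_weight_eq_inv_survival_prob
    {Ωp : Type*} [MeasurableSpace Ωp] (P : Measure Ωp) [IsProbabilityMeasure P]
    {α : Type*} [Countable α] (S : Set α) (zero : α) (hzero : zero ∉ S)
    (N : ℕ) (X : ℕ → Ωp → α)
    (hrange : ∀ k ω, X k ω ∈ S ∪ {zero})
    (n : ℕ) (hn1 : 1 ≤ n) (hnN : n ≤ N)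
    (x : ℕ → α) (hxS : ∀ k, 1 ≤ k → k ≤ n → x k ∈ S)
    -- `X_1 ∈ S` almost surely
    (hinit : P {ω | X 1 ω ∈ S} = 1)
    (hpos : ∀ k, 1 ≤ k → k ≤ n → 0 < (P {ω | X k ω = x k}).toReal)
    (hposS : ∀ k, 1 ≤ k → k ≤ n → 0 < (P {ω | X k ω ∈ S}).toReal)
    -- the incremental weights `w̃_k`, defined using conditional probabilities
    -- `P(A ∣ B) = P(A ∩ B) / P(B)`
    (wtil : ℕ → ℝ)
    (hwtil : ∀ k, 2 ≤ k → k ≤ n → wtil k =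
      ((P ({ω | X k ω = x k} ∩ {ω | X k ω ∈ S})).toReal
          / (P {ω | X k ω ∈ S}).toReal
        / (P {ω | X k ω = x k}).toReal)
      * ((P {ω | X (k-1) ω = x (k-1)}).toReal
        / ((P ({ω | X (k-1) ω = x (k-1)} ∩ {ω | X (k-1) ω ∈ S})).toReal
            / (P {ω | X (k-1) ω ∈ S}).toReal)))
    -- `w_n = ∏_{k=2}^n w̃_k` (with `w_1 = 1`, the empty product)
    (w : ℕ → ℝ) (hw1 : w 1 = 1)
    (hw : ∀ m, 1 ≤ m → m ≤ n → w m = ∏ k ∈ Finset.Icc 2 m, wtil k) :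
    w n = 1 / (P {ω | X n ω ∈ S}).toReal := by
  set f : ℕ → ℝ := fun k => (P {ω | X k ω ∈ S}).toReal with hf
  -- intersection collapses
  have hinter : ∀ k, 1 ≤ k → k ≤ n →
      ({ω | X k ω = x k} ∩ {ω | X k ω ∈ S}) = {ω | X k ω = x k} := by
    intro k hk1 hk2
    apply Set.inter_eq_self_of_subset_left
    intro ω hω
    simp only [Set.mem_setOf_eq] at hω ⊢
    rw [hω]; exact hxS k hk1 hk2
  have hwtil' : ∀ k, 2 ≤ k → k ≤ n → wtil k = f (k-1) / f k := by
    intro k hk2 hkn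
    have hk1 : 1 ≤ k := le_trans (by norm_num) hk2
    have hk1' : 1 ≤ k - 1 := Nat.le_sub_one_of_lt hk2
    have hk1n : k - 1 ≤ n := le_trans (Nat.sub_le k 1) hkn
    rw [hwtil k hk2 hkn, hinter k hk1 hkn, hinter (k-1) hk1' hk1n]
    have ha := hpos k hk1 hkn
    have hb := hpos (k-1) hk1' hk1n
    have hs := hposS k hk1 hkn
    have ht := hposS (k-1) hk1' hk1n
    field_simp
    simp only [hf]; rw [mul_div_cancel_left₀ _ hs.ne']
  -- telescoping product
  have key : ∀ m, 1 ≤ m → m ≤ n → (∏ k ∈ Finset.Icc 2 m, wtil k) = f 1 / f m := by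
    intro m hm1 hmn
    induction m with
    | zero => omega
    | succ p ih =>
      rcases Nat.eq_or_lt_of_le hm1 with h | h
      · simp [← h, div_self (ne_of_gt (hposS 1 le_rfl (le_trans (by omega) hmn)))]
        exact (div_self (ne_of_gt (hposS 1 le_rfl (le_trans (by omega) hmn)))).symm
      · have hp1 : 1 ≤ p := by omega
        have hpn : p ≤ n := by omega
        have h2 : 2 ≤ p + 1 := by omega
        rw [show Finset.Icc 2 (p+1) = insert (p+1) (Finset.Icc 2 p) by
          ext a; simp [Finset.mem_Icc, Finset.mem_insert]; omega,
          Finset.prod_insert (by simp), ih hp1 hpn,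
          hwtil' (p+1) h2 hmn]
        have hfp : f p ≠ 0 := ne_of_gt (hposS p hp1 hpn)
        have hfp1 : f (p+1) ≠ 0 := ne_of_gt (hposS (p+1) hm1 hmn)
        simp only [Nat.add_sub_cancel]
        field_simp
  have hf1 : f 1 = 1 := by simp [hf, hinit]
  rw [hw n hn1 le_rfl, key n hn1 le_rfl, hf1]
end

section
/- Fix a real δ ∈ (0,1) and integers N1 ≥ 2 and N2 ≥ max(5, 1/(1−δ)). Set p1 = N1/(N1 + δN2), p2 = δN2/(N1 + δN2), f1(x) = x(N1 − 1)/(N1 − x), f2(x) = x + (1 − x)/N2, V(x) = x/(1 − x), K = δN2/((N2 − 1)(N1 + δN2)), and d(x, y) = min{1, |1/(1−x) − 1/(1−y)|}. Let S = {x ∈ (0,1) : V(x) < 4K}. Then there exists s ∈ (0, 1) such that for all x, y ∈ S: p1 · d(f1(x), f1(y)) + p2 · d(f2(x), f2(y)) ≤ s. (Via the synchronous coupling this shows W_d(P(x,·), P(y,·)) ≤ s for all x, y ∈ S, i.e. the sublevel set S of the Lyapunov function is d-small.) -/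
lemma weight_chain_aux (t : ℝ) (ht : 5 ≤ t) :
    t / (t - 1) * (4 * (1 / (t + 1))) ≤ 5 / 6 := by
  have h1 : (0:ℝ) < t - 1 := by linarith
  have h2 : (0:ℝ) < t + 1 := by linarith
  rw [show t / (t - 1) * (4 * (1 / (t + 1))) = (4*t) / ((t-1)*(t+1)) by
    field_simp]
  rw [div_le_div_iff₀ (mul_pos h1 h2) (by norm_num : (0:ℝ) < 6)]
  nlinarith [sq_nonneg (t - 5)]

/-- The sublevel set `S = {x ∈ (0,1) : V(x) < 4K}` of the Lyapunov function is
`d`-small for the weight chain kernel: via the synchronous coupling, there is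
`s ∈ (0,1)` with `p1·d(f1 x, f1 y) + p2·d(f2 x, f2 y) ≤ s` for all `x, y ∈ S`. -/
theorem weight_chain_small_set
    (δ : ℝ) (hδ : δ ∈ Set.Ioo (0 : ℝ) 1)
    (N1 N2 : ℤ) (hN1 : 2 ≤ N1) (hN2 : max 5 (1 / (1 - δ)) ≤ (N2 : ℝ))
    (p1 p2 K : ℝ) (f1 f2 V : ℝ → ℝ) (d : ℝ → ℝ → ℝ) (S : Set ℝ)
    (hp1 : p1 = (N1 : ℝ) / ((N1 : ℝ) + δ * N2))
    (hp2 : p2 = δ * (N2 : ℝ) / ((N1 : ℝ) + δ * N2))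
    (hf1 : ∀ x, f1 x = x * ((N1 : ℝ) - 1) / ((N1 : ℝ) - x))
    (hf2 : ∀ x, f2 x = x + (1 - x) / (N2 : ℝ))
    (hV : ∀ x, V x = x / (1 - x))
    (hK : K = δ * (N2 : ℝ) / (((N2 : ℝ) - 1) * ((N1 : ℝ) + δ * N2)))
    (hd : ∀ x y, d x y = min 1 |1 / (1 - x) - 1 / (1 - y)|)
    (hS : S = {x ∈ Set.Ioo (0 : ℝ) 1 | V x < 4 * K}) :
    ∃ s ∈ Set.Ioo (0 : ℝ) 1, ∀ x ∈ S, ∀ y ∈ S,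
      p1 * d (f1 x) (f1 y) + p2 * d (f2 x) (f2 y) ≤ s := by
  obtain ⟨hδ0, hδ1⟩ := hδ
  have hN1R : (2:ℝ) ≤ (N1:ℝ) := by exact_mod_cast hN1
  have hN2R : (5:ℝ) ≤ (N2:ℝ) := le_trans (le_max_left _ _) hN2
  have hδN2i : 1/(1-δ) ≤ (N2:ℝ) := le_trans (le_max_right _ _) hN2
  have h1δ : 0 < 1 - δ := by linarith
  have hδN2' : δ * N2 ≤ (N2:ℝ) - 1 := by
    have h := (div_le_iff₀ h1δ).mp hδN2i
    nlinarith
  have hδN2pos : 0 < δ * (N2:ℝ) := by positivity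
  have hden : 0 < (N1:ℝ) + δ * N2 := by nlinarith
  have hN21 : (0:ℝ) < (N2:ℝ) - 1 := by linarith
  have hKpos : 0 < K := by rw [hK]; positivity
  have hKle : K ≤ 1/((N2:ℝ)+1) := by
    rw [hK, div_le_div_iff₀ (by positivity) (by linarith)]
    nlinarith
  -- auxiliary identities
  have hN1ne : (N1:ℝ) ≠ 0 := by linarith
  have e1 : ∀ z ∈ Set.Ioo (0:ℝ) 1, 1/(1 - f1 z) = ((N1:ℝ)-z)/((N1:ℝ)*(1-z)) := by
    intro z hz
    have h1z : (0:ℝ) < 1 - z := by linarith [hz.2]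
    have hNz : (0:ℝ) < (N1:ℝ) - z := by nlinarith [hz.2, hz.1]
    rw [hf1]
    rw [show 1 - z*((N1:ℝ)-1)/((N1:ℝ)-z) = (N1:ℝ)*(1-z)/((N1:ℝ)-z) by
      field_simp; ring]
    rw [one_div_div]
  have e2 : ∀ z : ℝ, z < 1 → 1/(1 - f2 z) = ((N2:ℝ)/((N2:ℝ)-1)) * (1/(1-z)) := by
    intro z hz
    have h1z : (0:ℝ) < 1 - z := by linarith
    rw [hf2]
    rw [show 1 - (z + (1-z)/(N2:ℝ)) = (1-z)*((N2:ℝ)-1)/(N2:ℝ) by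
      field_simp; ring]
    rw [one_div_div]
    rw [div_mul_eq_mul_div, mul_one_div, div_div]
  refine ⟨5/6, ⟨by norm_num, by norm_num⟩, ?_⟩
  intro x hx y hy
  rw [hS] at hx hy
  obtain ⟨⟨hx0, hx1⟩, hxV⟩ := hx
  obtain ⟨⟨hy0, hy1⟩, hyV⟩ := hy
  rw [hV] at hxV hyV
  have h1x : (0:ℝ) < 1 - x := by linarith
  have h1y : (0:ℝ) < 1 - y := by linarith
  -- bounds on 1/(1-x), 1/(1-y)
  have hax : 1/(1-x) = 1 + x/(1-x) := by field_simp; ring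
  have hay : 1/(1-y) = 1 + y/(1-y) := by field_simp; ring
  have hVx0 : 0 ≤ x/(1-x) := by positivity
  have hVy0 : 0 ≤ y/(1-y) := by positivity
  have hab : |1/(1-x) - 1/(1-y)| ≤ 4*K := by
    rw [abs_le]; constructor <;> rw [hax, hay] <;> linarith
  -- bound for f1 part
  have key1 : |1/(1 - f1 x) - 1/(1 - f1 y)| ≤ 4*K := by
    rw [e1 x ⟨hx0, hx1⟩, e1 y ⟨hy0, hy1⟩]
    have hid : ((N1:ℝ)-x)/((N1:ℝ)*(1-x)) - ((N1:ℝ)-y)/((N1:ℝ)*(1-y))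
        = (((N1:ℝ)-1)/(N1:ℝ)) * (1/(1-x) - 1/(1-y)) := by
      field_simp; ring
    rw [hid, abs_mul]
    have hc1 : |((N1:ℝ)-1)/(N1:ℝ)| ≤ 1 := by
      rw [abs_of_nonneg (div_nonneg (by linarith) (by linarith))]
      rw [div_le_one (by linarith)]; linarith
    calc |((N1:ℝ)-1)/(N1:ℝ)| * |1/(1-x) - 1/(1-y)|
        ≤ 1 * (4*K) := by
          apply mul_le_mul hc1 hab (abs_nonneg _) (by norm_num)
      _ = 4*K := by ring
  have key2 : |1/(1 - f2 x) - 1/(1 - f2 y)| ≤ ((N2:ℝ)/((N2:ℝ)-1)) * (4*K) := by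
    rw [e2 x hx1, e2 y hy1, ← mul_sub, abs_mul,
      abs_of_nonneg (show (0:ℝ) ≤ (N2:ℝ)/((N2:ℝ)-1) by positivity)]
    exact mul_le_mul_of_nonneg_left hab (by positivity)
  -- numeric bounds
  have hb1 : 4*K ≤ 5/6 := by
    have : 4*K ≤ 4*(1/((N2:ℝ)+1)) := by linarith
    have h6 : (1:ℝ)/((N2:ℝ)+1) ≤ 1/6 := by
      rw [div_le_div_iff₀ (by linarith) (by norm_num)]; linarith
    linarith
  have hb2 : ((N2:ℝ)/((N2:ℝ)-1)) * (4*K) ≤ 5/6 := by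
    have h1 : ((N2:ℝ)/((N2:ℝ)-1)) * (4*K) ≤ ((N2:ℝ)/((N2:ℝ)-1)) * (4*(1/((N2:ℝ)+1))) := by
      apply mul_le_mul_of_nonneg_left (by linarith) (by positivity)
    have h2 := weight_chain_aux (N2:ℝ) hN2R
    linarith
  have hd1 : d (f1 x) (f1 y) ≤ 5/6 := by
    rw [hd]; exact le_trans (min_le_right _ _) (le_trans key1 hb1)
  have hd2 : d (f2 x) (f2 y) ≤ 5/6 := by
    rw [hd]; exact le_trans (min_le_right _ _) (le_trans key2 hb2)
  have hd1' : 0 ≤ d (f1 x) (f1 y) := by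
    rw [hd]; exact le_min (by norm_num) (abs_nonneg _)
  have hd2' : 0 ≤ d (f2 x) (f2 y) := by
    rw [hd]; exact le_min (by norm_num) (abs_nonneg _)
  have hp1pos : 0 ≤ p1 := by rw [hp1]; positivity
  have hp2pos : 0 ≤ p2 := by rw [hp2]; positivity
  have hsum : p1 + p2 = 1 := by
    rw [hp1, hp2, ← add_div, div_self (ne_of_gt hden)]
  have A := mul_le_mul_of_nonneg_left hd1 hp1pos
  have B := mul_le_mul_of_nonneg_left hd2 hp2pos
  linarith
end

section
/- Fix a real δ ∈ (0,1) and integers N1 ≥ 2 and N2 ≥ max(5, 1/(1−δ)). Set p1 = N1/(N1 + δN2), p2 = δN2/(N1 + δN2), f1(x) = x(N1 − 1)/(N1 − x) and f2(x) = x + (1 − x)/N2. Then there exists exactly one probability measure μ on ℝ, supported on the open interval (0,1), that is invariant for the Markov kernel P moving x to f1(x) with probability p1 and to f2(x) with probability p2: that is, there is a unique probability measure μ on (0,1) such that for every bounded measurable g, ∫ g dμ = ∫ (p1 · g(f1(x)) + p2 · g(f2(x))) dμ(x). -/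
open MeasureTheory Set Filter Topology

set_option maxHeartbeats 1000000

namespace WeightChainAux

lemma sqrt_add_le (u v : ℝ) (hu : 0 ≤ u) (hv : 0 ≤ v) :
    Real.sqrt (u + v) ≤ Real.sqrt u + Real.sqrt v := by
  have h1 := Real.sq_sqrt hu
  have h2 := Real.sq_sqrt hv
  have h3 := Real.sqrt_nonneg u
  have h4 := Real.sqrt_nonneg v
  have h5 : Real.sqrt (u+v) ≤ Real.sqrt ((Real.sqrt u + Real.sqrt v)^2) := by
    apply Real.sqrt_le_sqrt; nlinarith
  simpa [Real.sqrt_sq (by positivity : (0:ℝ) ≤ Real.sqrt u + Real.sqrt v)] using h5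

lemma real_le_of_forall_pos_le_add {a b : ℝ} (h : ∀ ε : ℝ, 0 < ε → a ≤ b + ε) : a ≤ b := by
  by_contra hc
  push_neg at hc
  have := h ((a - b)/2) (by linarith)
  linarith


lemma sqrt_combo_lt (p q x y : ℝ) (hp : 0 < p) (hq : 0 < q) (hpq : p + q = 1)
    (hx : 0 ≤ x) (hxy : x < y) :
    p * Real.sqrt x + q * Real.sqrt y < Real.sqrt (p * x + q * y) := by
  have hy : 0 ≤ y := le_trans hx hxy.le
  have hux : Real.sqrt x ^ 2 = x := Real.sq_sqrt hx
  have hvy : Real.sqrt y ^ 2 = y := Real.sq_sqrt hy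
  have huv : Real.sqrt x < Real.sqrt y := Real.sqrt_lt_sqrt hx hxy
  have h3 := Real.sqrt_nonneg x
  have h4 := Real.sqrt_nonneg y
  rw [show p * x + q * y = p * Real.sqrt x ^2 + q * Real.sqrt y ^2 by rw [hux, hvy]]
  apply Real.lt_sqrt_of_sq_lt
  nlinarith [mul_pos (mul_pos hp hq) (mul_pos (sub_pos.2 huv) (sub_pos.2 huv))]

lemma min_le_sqrt_mul (u v : ℝ) (hu : 0 ≤ u) (hv : 0 ≤ v) :
    min u v ≤ Real.sqrt (u * v) := by
  have hm : 0 ≤ min u v := le_min hu hv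
  rw [Real.le_sqrt hm]
  · calc min u v ^ 2 = min u v * min u v := sq (min u v)
      _ ≤ u * v := mul_le_mul (min_le_left _ _) (min_le_right _ _) hm hu
  · positivity


lemma exists_inv (p1 p2 a1 a2 : ℝ) (hp1 : 0 < p1) (hp2 : 0 < p2) (hsum : p1 + p2 = 1)
    (ha1 : 0 < a1) (ha2 : 1 < a2)
    (hrho : p1 * Real.sqrt a1 + p2 * Real.sqrt a2 < 1) :
    ∃ μ : Measure ℝ, IsProbabilityMeasure μ ∧ μ (Set.Ioi 1) = 1 ∧
      μ = ENNReal.ofReal p1 • μ.map (fun z => a1 * z + (1 - a1)) +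
          ENNReal.ofReal p2 • μ.map (fun z => a2 * z) := by
  have ha20 : (0:ℝ) < a2 := lt_trans one_pos ha2
  set P1 := ENNReal.ofReal p1 with hP1
  set P2 := ENNReal.ofReal p2 with hP2
  set h1 : ℝ → ℝ := fun z => a1 * z + (1 - a1) with hh1
  set h2 : ℝ → ℝ := fun z => a2 * z with hh2
  have mh1 : Measurable h1 := (measurable_id.const_mul a1).add_const (1 - a1)
  have mh2 : Measurable h2 := measurable_id.const_mul a2
  set g1 : ℝ → ℝ := fun t => (t - (1 - a1)) / a1 with hg1
  set g2 : ℝ → ℝ := fun t => t / a2 with hg2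
  have hg1lt : ∀ t, t < 1 → g1 t < 1 := by
    intro t ht; rw [hg1]; dsimp only; rw [div_lt_one ha1]; linarith
  have hg2lt : ∀ t, t < 1 → g2 t < 1 := by
    intro t ht; rw [hg2]; dsimp only; rw [div_lt_one ha20]; linarith
  have hg1one : g1 1 = 1 := by rw [hg1]; dsimp only; field_simp; ring
  have hg2one : g2 1 < 1 := by rw [hg2]; dsimp only; rw [div_lt_one ha20]; exact ha2
  have hg1mono : Monotone g1 := fun u v h => by
    rw [hg1]; dsimp only; gcongr
  have hg2mono : Monotone g2 := fun u v h => by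
    rw [hg2]; dsimp only; gcongr
  have hg1smono : StrictMono g1 := fun u v h => by
    rw [hg1]; dsimp only; gcongr
  have hg2smono : StrictMono g2 := fun u v h => by
    rw [hg2]; dsimp only; gcongr
  have hpre1 : ∀ t, h1 ⁻¹' (Set.Iic t) = Set.Iic (g1 t) := by
    intro t; ext z
    simp only [Set.mem_preimage, Set.mem_Iic, hh1, hg1]
    rw [le_div_iff₀ ha1]
    constructor <;> intro h <;> nlinarith
  have hpre2 : ∀ t, h2 ⁻¹' (Set.Iic t) = Set.Iic (g2 t) := by
    intro t; ext z
    simp only [Set.mem_preimage, Set.mem_Iic, hh2, hg2]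
    rw [le_div_iff₀ ha20]
    constructor <;> intro h <;> nlinarith
  -- the iteration on measures
  set Φ : Measure ℝ → Measure ℝ := fun μ => P1 • μ.map h1 + P2 • μ.map h2 with hΦ
  set μn : ℕ → Measure ℝ := fun n => Φ^[n] (Measure.dirac 1) with hμn
  have hμsucc : ∀ n, μn (n + 1) = Φ (μn n) := fun n => Function.iterate_succ_apply' Φ n _
  have hμ0 : μn 0 = Measure.dirac 1 := rfl
  have hP1P2sum : P1 + P2 = 1 := by
    rw [hP1, hP2, ← ENNReal.ofReal_add hp1.le hp2.le, hsum, ENNReal.ofReal_one]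
  have probn : ∀ n, IsProbabilityMeasure (μn n) := by
    intro n; induction n with
    | zero => rw [hμ0]; infer_instance
    | succ n ih =>
      rw [hμsucc n]
      constructor
      have h1' : (μn n).map h1 Set.univ = 1 := by
        rw [Measure.map_apply mh1 MeasurableSet.univ, Set.preimage_univ, measure_univ]
      have h2' : (μn n).map h2 Set.univ = 1 := by
        rw [Measure.map_apply mh2 MeasurableSet.univ, Set.preimage_univ, measure_univ]
      rw [hΦ]
      simp only [Measure.add_apply, Measure.smul_apply, smul_eq_mul, h1', h2', mul_one]
      exact hP1P2sum
  have happly : ∀ n t, μn (n+1) (Set.Iic t)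
      = P1 * μn n (Set.Iic (g1 t)) + P2 * μn n (Set.Iic (g2 t)) := by
    intro n t
    rw [hμsucc n, hΦ]
    simp only [Measure.add_apply, Measure.smul_apply, smul_eq_mul]
    rw [Measure.map_apply mh1 measurableSet_Iic, Measure.map_apply mh2 measurableSet_Iic,
      hpre1, hpre2]
  -- CDFs
  set Fn : ℕ → ℝ → ℝ := fun n t => (μn n (Set.Iic t)).toReal with hFn
  have hrec : ∀ n t, Fn (n+1) t = p1 * Fn n (g1 t) + p2 * Fn n (g2 t) := by
    intro n t
    rw [hFn]; dsimp only
    rw [happly n t, ENNReal.toReal_add, ENNReal.toReal_mul, ENNReal.toReal_mul,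
      hP1, hP2, ENNReal.toReal_ofReal hp1.le, ENNReal.toReal_ofReal hp2.le]
    · exact ENNReal.mul_ne_top ENNReal.ofReal_ne_top (measure_ne_top _ _)
    · exact ENNReal.mul_ne_top ENNReal.ofReal_ne_top (measure_ne_top _ _)
  have hF0big : ∀ t, 1 ≤ t → Fn 0 t = 1 := by
    intro t ht
    rw [hFn]; dsimp only
    rw [hμ0, Measure.dirac_apply' 1 measurableSet_Iic]
    simp [Set.indicator_of_mem, Set.mem_Iic, ht]
  have hFzero : ∀ n t, t < 1 → Fn n t = 0 := by
    intro n
    induction n with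
    | zero =>
      intro t ht
      rw [hFn]; dsimp only
      rw [hμ0, Measure.dirac_apply' 1 measurableSet_Iic]
      simp [Set.indicator_of_notMem, Set.mem_Iic, not_le.mpr ht]
    | succ n ih =>
      intro t ht
      rw [hrec n t, ih (g1 t) (hg1lt t ht), ih (g2 t) (hg2lt t ht)]
      ring
  have hFnonneg : ∀ n t, 0 ≤ Fn n t := fun n t => ENNReal.toReal_nonneg
  have hFle1 : ∀ n t, Fn n t ≤ 1 := by
    intro n t
    haveI := probn n
    rw [hFn]; dsimp only
    rw [show (1:ℝ) = (1:ENNReal).toReal by simp]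
    exact ENNReal.toReal_mono ENNReal.one_ne_top prob_le_one
  have hFmono : ∀ n, Monotone (Fn n) := by
    intro n u v h
    haveI := probn n
    exact ENNReal.toReal_mono (measure_ne_top _ _) (measure_mono (Set.Iic_subset_Iic.mpr h))
  have hFanti : ∀ t, Antitone fun n => Fn n t := by
    have step : ∀ n, ∀ t, Fn (n+1) t ≤ Fn n t := by
      intro n
      induction n with
      | zero =>
        intro t
        rcases lt_or_ge t 1 with ht | ht
        · rw [hFzero 1 t ht, hFzero 0 t ht]
        · rw [hF0big t ht]
          calc Fn 1 t ≤ 1 := hFle1 1 t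
      | succ n ih =>
        intro t
        rw [hrec (n+1) t, hrec n t]
        have i1 := ih (g1 t)
        have i2 := ih (g2 t)
        nlinarith
    intro t
    exact antitone_nat_of_succ_le fun n => step n t
  set F : ℝ → ℝ := fun t => ⨅ n, Fn n t with hF
  have hbddb : ∀ t, BddBelow (Set.range fun n => Fn n t) := by
    intro t; exact ⟨0, by rintro x ⟨n, rfl⟩; exact hFnonneg n t⟩
  have hFtend : ∀ t, Tendsto (fun n => Fn n t) atTop (𝓝 (F t)) := by
    intro t; exact tendsto_atTop_ciInf (hFanti t) (hbddb t)
  have hFlein : ∀ t n, F t ≤ Fn n t := by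
    intro t n; exact ciInf_le (hbddb t) n
  have hFnonneg' : ∀ t, 0 ≤ F t := by
    intro t; exact le_ciInf fun n => hFnonneg n t
  have hFle1' : ∀ t, F t ≤ 1 := fun t => le_trans (hFlein t 0) (hFle1 0 t)
  have hFmono' : Monotone F := by
    intro u v h
    exact le_ciInf fun n => le_trans (hFlein u n) (hFmono n h)
  have hFzero' : ∀ t, t < 1 → F t = 0 := by
    intro t ht
    exact le_antisymm (le_trans (hFlein t 0) (by rw [hFzero 0 t ht])) (hFnonneg' t)
  have hfix : ∀ t, p1 * F (g1 t) + p2 * F (g2 t) = F t := by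
    intro t
    have A : Tendsto (fun n => Fn (n+1) t) atTop
        (𝓝 (p1 * F (g1 t) + p2 * F (g2 t))) := by
      have := ((hFtend (g1 t)).const_mul p1).add ((hFtend (g2 t)).const_mul p2)
      exact this.congr fun n => (hrec n t).symm
    have B : Tendsto (fun n => Fn (n+1) t) atTop (𝓝 (F t)) :=
      (hFtend t).comp (tendsto_add_atTop_nat 1)
    exact tendsto_nhds_unique A B

  -- right-continuous regularization
  set Ft : ℝ → ℝ := fun t => sInf (F '' Set.Ioi t) with hFt
  have hne : ∀ t : ℝ, (F '' Set.Ioi t).Nonempty := fun t => ⟨F (t+1), ⟨t+1, by simp, rfl⟩⟩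
  have hbdd : ∀ t : ℝ, BddBelow (F '' Set.Ioi t) :=
    fun t => ⟨0, by rintro x ⟨u, _, rfl⟩; exact hFnonneg' u⟩
  have hFtle : ∀ t u, t < u → Ft t ≤ F u := fun t u h => csInf_le (hbdd t) ⟨u, h, rfl⟩
  have hFFt : ∀ t, F t ≤ Ft t := fun t => le_csInf (hne t)
    (by rintro x ⟨u, hu, rfl⟩; exact hFmono' (le_of_lt hu))
  have hFtmono : Monotone Ft := by
    intro u v h
    refine le_csInf (hne v) ?_
    rintro x ⟨s, hs, rfl⟩
    exact hFtle u s (lt_of_le_of_lt h hs)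
  have hFtnonneg : ∀ t, 0 ≤ Ft t := fun t => le_trans (hFnonneg' t) (hFFt t)
  have hFtle1 : ∀ t, Ft t ≤ 1 := fun t => le_trans (hFtle t (t+1) (by linarith)) (hFle1' _)
  have hFtzero : ∀ t, t < 1 → Ft t = 0 := by
    intro t ht
    refine le_antisymm ?_ (hFtnonneg t)
    have h2' : Ft t ≤ F ((t+1)/2) := hFtle t _ (by linarith)
    rwa [hFzero' _ (by linarith)] at h2'
  have hFtrc : ∀ t, ContinuousWithinAt Ft (Set.Ici t) t := by
    intro t
    rw [ContinuousWithinAt, Metric.tendsto_nhdsWithin_nhds]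
    intro ε hε
    obtain ⟨x, ⟨s, hs, rfl⟩, hxlt⟩ := exists_lt_of_csInf_lt (hne t)
      (show sInf (F '' Set.Ioi t) < Ft t + ε/2 from lt_add_of_pos_right _ (by linarith))
    have hts : t < s := hs
    refine ⟨s - t, by linarith, ?_⟩
    intro u hu hud
    have htu : t ≤ u := hu
    have hus : u < s := by
      rw [Real.dist_eq, abs_of_nonneg (by linarith)] at hud; linarith
    have hmid1 : Ft u ≤ F ((u + s)/2) := hFtle u _ (by linarith)
    have hmid2 : F ((u + s)/2) ≤ F s := hFmono' (by linarith)
    have hlow : Ft t ≤ Ft u := hFtmono htu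
    rw [Real.dist_eq, abs_of_nonneg (by linarith)]
    linarith
  -- fixed point equation for Ft
  have hfixt : ∀ t, p1 * Ft (g1 t) + p2 * Ft (g2 t) = Ft t := by
    intro t
    apply le_antisymm
    · refine le_csInf (hne t) ?_
      rintro x ⟨u, hu, rfl⟩
      have hu' : t < u := hu
      have e1 : Ft (g1 t) ≤ F (g1 u) := csInf_le (hbdd _) ⟨g1 u, hg1smono hu', rfl⟩
      have e2 : Ft (g2 t) ≤ F (g2 u) := csInf_le (hbdd _) ⟨g2 u, hg2smono hu', rfl⟩
      have := hfix u
      nlinarith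
    · apply real_le_of_forall_pos_le_add
      intro ε hε
      obtain ⟨x1, ⟨s1, hs1, rfl⟩, hx1⟩ := exists_lt_of_csInf_lt (hne (g1 t))
        (show sInf (F '' Set.Ioi (g1 t)) < Ft (g1 t) + ε from lt_add_of_pos_right _ hε)
      obtain ⟨x2, ⟨s2, hs2, rfl⟩, hx2⟩ := exists_lt_of_csInf_lt (hne (g2 t))
        (show sInf (F '' Set.Ioi (g2 t)) < Ft (g2 t) + ε from lt_add_of_pos_right _ hε)
      set v1 : ℝ := a1 * s1 + (1 - a1) with hv1
      set v2 : ℝ := a2 * s2 with hv2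
      have hg1v1 : g1 v1 = s1 := by rw [hg1, hv1]; dsimp only; field_simp; ring
      have hg2v2 : g2 v2 = s2 := by rw [hg2, hv2]; dsimp only; field_simp
      have htv1 : t < v1 := by
        have := (div_lt_iff₀ ha1).mp (show g1 t < s1 from hs1)
        rw [hv1]; nlinarith
      have htv2 : t < v2 := by
        have := (div_lt_iff₀ ha20).mp (show g2 t < s2 from hs2)
        rw [hv2]; nlinarith
      set v : ℝ := min v1 v2 with hv
      have htv : t < v := lt_min htv1 htv2
      have hFtv : Ft t ≤ F v := hFtle t v htv
      have hv1' : F (g1 v) ≤ F s1 := by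
        rw [← hg1v1]; exact hFmono' (hg1mono (min_le_left _ _))
      have hv2' : F (g2 v) ≤ F s2 := by
        rw [← hg2v2]; exact hFmono' (hg2mono (min_le_right _ _))
      have hfv := hfix v
      nlinarith
  -- moment bound
  set w : ℝ → ENNReal := fun z => ENNReal.ofReal (Real.sqrt (z - 1)) with hw
  have mw : Measurable w :=
    (Real.continuous_sqrt.measurable.comp (measurable_id.sub_const 1)).ennreal_ofReal
  set Mn : ℕ → ENNReal := fun n => ∫⁻ z, w z ∂(μn n) with hMn
  have hM0 : Mn 0 = 0 := by
    rw [hMn]; dsimp only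
    rw [hμ0, lintegral_dirac' 1 mw, hw]; simp
  set R := ENNReal.ofReal (p1 * Real.sqrt a1 + p2 * Real.sqrt a2) with hR
  set Cc := ENNReal.ofReal (p2 * Real.sqrt (a2 - 1)) with hCc
  have hR1 : R < 1 := by rw [hR]; exact ENNReal.ofReal_lt_one.mpr hrho
  have hw1 : ∀ z, w (h1 z) = ENNReal.ofReal (Real.sqrt a1) * w z := by
    intro z
    rw [hw]; dsimp only
    rw [show h1 z - 1 = a1 * (z - 1) by rw [hh1]; dsimp only; ring,
      Real.sqrt_mul ha1.le, ENNReal.ofReal_mul (Real.sqrt_nonneg a1)]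
  have hw2 : ∀ z, w (h2 z) ≤ ENNReal.ofReal (Real.sqrt a2) * w z
      + ENNReal.ofReal (Real.sqrt (a2-1)) := by
    intro z
    rw [hw]; dsimp only
    rw [← ENNReal.ofReal_mul (Real.sqrt_nonneg a2),
      ← ENNReal.ofReal_add (by positivity) (Real.sqrt_nonneg _)]
    apply ENNReal.ofReal_le_ofReal
    rcases le_or_gt z 1 with h | h
    · have h0 : Real.sqrt (z - 1) = 0 := by
        apply Real.sqrt_eq_zero_of_nonpos; linarith
      rw [h0, mul_zero, zero_add]
      apply Real.sqrt_le_sqrt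
      rw [hh2]; dsimp only; nlinarith
    · rw [show h2 z - 1 = a2 * (z-1) + (a2 - 1) by rw [hh2]; dsimp only; ring]
      calc Real.sqrt (a2 * (z-1) + (a2-1))
          ≤ Real.sqrt (a2 * (z-1)) + Real.sqrt (a2-1) :=
            sqrt_add_le _ _ (by nlinarith) (by linarith)
        _ = Real.sqrt a2 * Real.sqrt (z-1) + Real.sqrt (a2-1) := by
            rw [Real.sqrt_mul ha20.le]
  have hMrec : ∀ n, Mn (n+1) ≤ R * Mn n + Cc := by
    intro n
    haveI := probn n
    have e1 : ∫⁻ z, w (h1 z) ∂(μn n) = ENNReal.ofReal (Real.sqrt a1) * Mn n := by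
      rw [hMn]; dsimp only
      rw [← lintegral_const_mul _ mw]
      exact lintegral_congr fun z => hw1 z
    have e2 : ∫⁻ z, w (h2 z) ∂(μn n) ≤ ENNReal.ofReal (Real.sqrt a2) * Mn n
        + ENNReal.ofReal (Real.sqrt (a2-1)) := by
      calc ∫⁻ z, w (h2 z) ∂(μn n)
          ≤ ∫⁻ z, (ENNReal.ofReal (Real.sqrt a2) * w z
              + ENNReal.ofReal (Real.sqrt (a2-1))) ∂(μn n) :=
            lintegral_mono fun z => hw2 z
        _ = ENNReal.ofReal (Real.sqrt a2) * Mn n + ENNReal.ofReal (Real.sqrt (a2-1)) := by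
            rw [lintegral_add_left (mw.const_mul _), lintegral_const_mul _ mw,
              lintegral_const, measure_univ, mul_one, hMn]
    have expand : Mn (n+1) = P1 * ∫⁻ z, w (h1 z) ∂(μn n) + P2 * ∫⁻ z, w (h2 z) ∂(μn n) := by
      rw [hMn]; dsimp only
      rw [hμsucc n, hΦ]; dsimp only
      rw [lintegral_add_measure, lintegral_smul_measure, lintegral_smul_measure,
        lintegral_map mw mh1, lintegral_map mw mh2, smul_eq_mul, smul_eq_mul]
    rw [expand]
    calc P1 * ∫⁻ z, w (h1 z) ∂(μn n) + P2 * ∫⁻ z, w (h2 z) ∂(μn n)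
        ≤ P1 * (ENNReal.ofReal (Real.sqrt a1) * Mn n)
          + P2 * (ENNReal.ofReal (Real.sqrt a2) * Mn n + ENNReal.ofReal (Real.sqrt (a2-1))) := by
          rw [e1]
          gcongr
      _ = (P1 * ENNReal.ofReal (Real.sqrt a1) + P2 * ENNReal.ofReal (Real.sqrt a2)) * Mn n
          + P2 * ENNReal.ofReal (Real.sqrt (a2-1)) := by ring
      _ = R * Mn n + Cc := by
          rw [hP1, hP2, hR, hCc, ← ENNReal.ofReal_mul hp1.le, ← ENNReal.ofReal_mul hp2.le,
            ← ENNReal.ofReal_add (by positivity) (by positivity),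
            ← ENNReal.ofReal_mul hp2.le]
  set K := Cc * (1 - R)⁻¹ with hK
  have h1Rne : (1 : ENNReal) - R ≠ 0 :=
    fun h => absurd (tsub_eq_zero_iff_le.mp h) (not_le.mpr hR1)
  have h1Rnetop : (1 : ENNReal) - R ≠ ⊤ := ne_top_of_le_ne_top ENNReal.one_ne_top tsub_le_self
  have hKne : K ≠ ⊤ := ENNReal.mul_ne_top ENNReal.ofReal_ne_top (ENNReal.inv_ne_top.mpr h1Rne)
  have hKrec : R * K + Cc ≤ K := by
    rw [hK]
    have : R * (Cc * (1-R)⁻¹) + Cc = Cc * ((R + (1 - R)) * (1-R)⁻¹) := by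
      rw [add_mul, ENNReal.mul_inv_cancel h1Rne h1Rnetop]; ring
    rw [this, add_tsub_cancel_of_le hR1.le, one_mul]
  have hMK : ∀ n, Mn n ≤ K := by
    intro n; induction n with
    | zero => rw [hM0]; exact zero_le
    | succ n ih =>
      refine le_trans (hMrec n) (le_trans ?_ hKrec)
      gcongr
  -- tail estimate
  have htail : ∀ n t, 1 < t → μn n (Set.Ioi t) ≤ K / ENNReal.ofReal (Real.sqrt (t-1)) := by
    intro n t ht
    have hx0 : ENNReal.ofReal (Real.sqrt (t-1)) ≠ 0 := by
      simp only [ne_eq, ENNReal.ofReal_eq_zero, not_le]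
      exact Real.sqrt_pos.mpr (by linarith)
    rw [ENNReal.le_div_iff_mul_le (Or.inl hx0) (Or.inl ENNReal.ofReal_ne_top)]
    have hsub : Set.Ioi t ⊆ {z | ENNReal.ofReal (Real.sqrt (t-1)) ≤ w z} := by
      intro z hz
      simp only [Set.mem_setOf_eq, hw]
      exact ENNReal.ofReal_le_ofReal (Real.sqrt_le_sqrt
        (by simp only [Set.mem_Ioi] at hz; linarith))
    calc μn n (Set.Ioi t) * ENNReal.ofReal (Real.sqrt (t-1))
        = ENNReal.ofReal (Real.sqrt (t-1)) * μn n (Set.Ioi t) := by ring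
      _ ≤ ENNReal.ofReal (Real.sqrt (t-1))
          * μn n {z | ENNReal.ofReal (Real.sqrt (t-1)) ≤ w z} := by
          exact mul_le_mul_right (measure_mono hsub) _
      _ ≤ ∫⁻ z, w z ∂(μn n) := mul_meas_ge_le_lintegral₀ mw.aemeasurable _
      _ ≤ K := hMK n
  set κ : ℝ → ℝ := fun t => K.toReal / Real.sqrt (t - 1) with hκ
  have hFlow : ∀ n t, 1 < t → 1 - κ t ≤ Fn n t := by
    intro n t ht
    haveI := probn n
    have hx0 : ENNReal.ofReal (Real.sqrt (t-1)) ≠ 0 := by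
      simp only [ne_eq, ENNReal.ofReal_eq_zero, not_le]
      exact Real.sqrt_pos.mpr (by linarith)
    have hBne : K / ENNReal.ofReal (Real.sqrt (t-1)) ≠ ⊤ :=
      (ENNReal.div_lt_top hKne hx0).ne
    have hioi : (μn n (Set.Ioi t)).toReal ≤ κ t := by
      have := ENNReal.toReal_mono hBne (htail n t ht)
      rw [ENNReal.toReal_div, ENNReal.toReal_ofReal (Real.sqrt_nonneg _)] at this
      simpa [hκ] using this
    have hcompl : μn n (Set.Ioi t) = 1 - μn n (Set.Iic t) := by
      rw [← Set.compl_Iic]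
      exact prob_compl_eq_one_sub measurableSet_Iic
    have h1 : (μn n (Set.Ioi t)).toReal = 1 - Fn n t := by
      rw [hcompl, ENNReal.toReal_sub_of_le prob_le_one ENNReal.one_ne_top]
      simp [hFn]
    linarith [hioi, h1.symm.le, h1.le]
  have hFtlow : ∀ t, 1 < t → 1 - κ t ≤ Ft t := by
    intro t ht
    refine le_trans ?_ (hFFt t)
    exact le_ciInf fun n => hFlow n t ht
  -- limit at +infinity
  have hsqrtatTop : Tendsto Real.sqrt atTop atTop :=
    tendsto_atTop_atTop_of_monotone (fun u v h => Real.sqrt_le_sqrt h)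
      (fun b => ⟨max 0 b ^ 2, by rw [Real.sqrt_sq (le_max_left 0 b)]; exact le_max_right 0 b⟩)
  have hκ0 : Tendsto κ atTop (𝓝 0) := by
    rw [hκ]
    apply Tendsto.div_atTop tendsto_const_nhds
    apply hsqrtatTop.comp
    have : Tendsto (fun t : ℝ => t + (-1)) atTop atTop :=
      tendsto_atTop_add_const_right atTop (-1) tendsto_id
    exact this.congr fun t => by ring
  have htop : Tendsto Ft atTop (𝓝 1) := by
    have hlow : Tendsto (fun t => 1 - κ t) atTop (𝓝 1) := by
      have := tendsto_const_nhds (x := (1:ℝ)) (f := (atTop : Filter ℝ))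
      simpa using this.sub hκ0
    apply tendsto_of_tendsto_of_tendsto_of_le_of_le' hlow tendsto_const_nhds
    · filter_upwards [eventually_gt_atTop (1:ℝ)] with t ht
      exact hFtlow t ht
    · filter_upwards with t
      exact hFtle1 t
  -- the Stieltjes measure
  set S : StieltjesFunction ℝ := ⟨Ft, hFtmono, hFtrc⟩ with hS
  have hScoe : ⇑S = Ft := rfl
  have hbot : Tendsto Ft atBot (𝓝 0) := by
    apply Tendsto.congr' _ (tendsto_const_nhds (x := (0:ℝ)))
    filter_upwards [eventually_lt_atBot (1:ℝ)] with t ht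
    exact (hFtzero t ht).symm
  have hbot' : Tendsto (⇑S) atBot (𝓝 0) := by rw [hScoe]; exact hbot
  have htop' : Tendsto (⇑S) atTop (𝓝 1) := by rw [hScoe]; exact htop
  have hSIic : ∀ t, S.measure (Set.Iic t) = ENNReal.ofReal (Ft t) := by
    intro t
    rw [S.measure_Iic hbot' t, hScoe]
    simp
  haveI hSprob : IsProbabilityMeasure S.measure := S.isProbabilityMeasure hbot' htop'
  have hFt1 : Ft 1 = 0 := by
    have h := hfixt 1
    rw [hg1one, hFtzero _ hg2one, mul_zero, add_zero] at h
    nlinarith [hFtnonneg 1, hp2, hsum]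
  have hIoi1 : S.measure (Set.Ioi 1) = 1 := by
    have hc : S.measure (Set.Iic 1) = 0 := by rw [hSIic 1, hFt1]; simp
    have hcompl := prob_compl_eq_one_sub (μ := S.measure) (measurableSet_Iic (a := (1:ℝ)))
    rw [Set.compl_Iic] at hcompl
    rw [hcompl, hc]; simp
  refine ⟨S.measure, hSprob, hIoi1, ?_⟩
  apply Measure.ext_of_Iic
  intro t
  rw [Measure.add_apply, Measure.smul_apply, Measure.smul_apply,
    Measure.map_apply mh1 measurableSet_Iic, Measure.map_apply mh2 measurableSet_Iic,
    hpre1, hpre2, hSIic, hSIic, hSIic, smul_eq_mul, smul_eq_mul, hP1, hP2,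
    ← ENNReal.ofReal_mul hp1.le, ← ENNReal.ofReal_mul hp2.le,
    ← ENNReal.ofReal_add (mul_nonneg hp1.le (hFtnonneg _)) (mul_nonneg hp2.le (hFtnonneg _)),
    hfixt t]

end WeightChainAux

open WeightChainAux

/-- There is exactly one probability measure on `ℝ`, supported on `(0,1)`,
that is invariant for the Markov kernel moving `x` to `f1(x)` with probability
`p1` and to `f2(x)` with probability `p2` (Theorem on Wasserstein convergence
of the regional-resampling weight chain). -/
theorem weight_chain_unique_invariant_measure
    (δ : ℝ) (hδ : δ ∈ Set.Ioo (0 : ℝ) 1)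
    (N1 N2 : ℤ) (hN1 : 2 ≤ N1) (hN2 : max 5 (1 / (1 - δ)) ≤ (N2 : ℝ))
    (p1 p2 : ℝ) (f1 f2 : ℝ → ℝ)
    (hp1 : p1 = (N1 : ℝ) / ((N1 : ℝ) + δ * N2))
    (hp2 : p2 = δ * (N2 : ℝ) / ((N1 : ℝ) + δ * N2))
    (hf1 : ∀ x, f1 x = x * ((N1 : ℝ) - 1) / ((N1 : ℝ) - x))
    (hf2 : ∀ x, f2 x = x + (1 - x) / (N2 : ℝ)) :
    ∃! μ : Measure ℝ, IsProbabilityMeasure μ ∧ μ (Set.Ioo (0 : ℝ) 1) = 1 ∧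
      ∀ g : ℝ → ℝ, Measurable g → (∃ C, ∀ x, |g x| ≤ C) →
        (∫ x, g x ∂μ) = ∫ x, (p1 * g (f1 x) + p2 * g (f2 x)) ∂μ := by
  obtain ⟨hδ0, hδ1⟩ := hδ
  have hb5 : (5:ℝ) ≤ (N2:ℝ) := le_trans (le_max_left _ _) hN2
  have hbinv : 1/(1-δ) ≤ (N2:ℝ) := le_trans (le_max_right _ _) hN2
  have ha2' : (2:ℝ) ≤ (N1:ℝ) := by exact_mod_cast hN1
  set a : ℝ := (N1:ℝ) with hadef
  set b : ℝ := (N2:ℝ) with hbdef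
  have hb1 : (1:ℝ) < b := by linarith
  have hb0 : (0:ℝ) < b := by linarith
  have ha0 : (0:ℝ) < a := by linarith
  have ha1' : (1:ℝ) < a := by linarith
  have hs : (0:ℝ) < a + δ * b := by positivity
  have hp1pos : 0 < p1 := by rw [hp1]; positivity
  have hp2pos : 0 < p2 := by rw [hp2]; positivity
  have hsum : p1 + p2 = 1 := by rw [hp1, hp2]; field_simp
  set A1 : ℝ := (a - 1)/a with hA1def
  set A2 : ℝ := b/(b - 1) with hA2def
  have hA1pos : 0 < A1 := by rw [hA1def]; apply div_pos <;> linarith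
  have hA1lt : A1 < 1 := by rw [hA1def, div_lt_one ha0]; linarith
  have hA2gt : 1 < A2 := by
    rw [hA2def, lt_div_iff₀ (by linarith)]; linarith
  have hδb : δ * b ≤ b - 1 := by
    have h1 : 1 ≤ b * (1 - δ) := by
      have := (div_le_iff₀ (by linarith : (0:ℝ) < 1 - δ)).mp hbinv
      linarith
    nlinarith
  have hrsum : p1 * A1 + p2 * A2 ≤ 1 := by
    have expand : p1 * A1 + p2 * A2 = ((a-1)*(b-1) + δ*b*b) / ((a + δ*b)*(b-1)) := by
      have hne1 : a + δ*b ≠ 0 := ne_of_gt hs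
      have hne2 : a ≠ 0 := ne_of_gt ha0
      have hne3 : b - 1 ≠ 0 := ne_of_gt (by linarith)
      rw [hp1, hp2, hA1def, hA2def]
      field_simp
    rw [expand, div_le_one (mul_pos hs (by linarith))]
    nlinarith
  have hrho : p1 * Real.sqrt A1 + p2 * Real.sqrt A2 < 1 := by
    have h := sqrt_combo_lt p1 p2 A1 A2 hp1pos hp2pos hsum hA1pos.le (lt_trans hA1lt hA2gt)
    have h2 : Real.sqrt (p1 * A1 + p2 * A2) ≤ 1 := Real.sqrt_le_one.mpr hrsum
    linarith
  -- conjugation maps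
  set φ : ℝ → ℝ := fun x => (1 - x)⁻¹ with hφ
  set ψ : ℝ → ℝ := fun z => 1 - z⁻¹ with hψ
  have mφ : Measurable φ := (measurable_const.sub measurable_id).inv
  have mψ : Measurable ψ := measurable_const.sub measurable_id.inv
  have mf1 : Measurable f1 := by
    have h : f1 = fun x => x * (a - 1) / (a - x) := funext hf1
    rw [h]
    exact (measurable_id.mul_const _).div (measurable_const.sub measurable_id)
  have mf2 : Measurable f2 := by
    have h : f2 = fun x => x + (1 - x) / b := funext hf2
    rw [h]
    exact measurable_id.add ((measurable_const.sub measurable_id).div_const _)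
  have hmem1 : ∀ x ∈ Set.Ioo (0:ℝ) 1, f1 x ∈ Set.Ioo (0:ℝ) 1 := by
    rintro x ⟨hx0, hx1⟩
    rw [hf1]
    have hax : 0 < a - x := by linarith
    constructor
    · apply div_pos ?_ hax
      nlinarith
    · rw [div_lt_one hax]
      nlinarith
  have hmem2 : ∀ x ∈ Set.Ioo (0:ℝ) 1, f2 x ∈ Set.Ioo (0:ℝ) 1 := by
    rintro x ⟨hx0, hx1⟩
    rw [hf2]
    have h1x : 0 < 1 - x := by linarith
    constructor
    · have : 0 < (1 - x)/b := div_pos h1x hb0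
      linarith
    · have : (1 - x)/b < 1 - x := div_lt_self h1x hb1
      linarith
  have hconj1 : ∀ x ∈ Set.Ioo (0:ℝ) 1, φ (f1 x) = A1 * φ x + (1 - A1) := by
    rintro x ⟨hx0, hx1⟩
    rw [hφ, hf1, hA1def]; dsimp only
    have h1 : (1:ℝ) - x ≠ 0 := ne_of_gt (by linarith)
    have h2 : a - x ≠ 0 := ne_of_gt (by linarith)
    have h3 : a ≠ 0 := ne_of_gt ha0
    have h4 : 1 - x * (a-1)/(a-x) = a*(1-x)/(a-x) := by field_simp; ring
    rw [h4]
    have h5 : a*(1-x)/(a-x) ≠ 0 := by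
      apply div_ne_zero ?_ h2
      apply mul_ne_zero h3 h1
    field_simp
    ring
  have hconj2 : ∀ x ∈ Set.Ioo (0:ℝ) 1, φ (f2 x) = A2 * φ x := by
    rintro x ⟨hx0, hx1⟩
    rw [hφ, hf2, hA2def]; dsimp only
    have h1 : (1:ℝ) - x ≠ 0 := ne_of_gt (by linarith)
    have h3 : b ≠ 0 := ne_of_gt hb0
    have h3' : b - 1 ≠ 0 := ne_of_gt (by linarith)
    have h4 : 1 - (x + (1-x)/b) = (1-x)*(b-1)/b := by field_simp; ring
    rw [h4, div_eq_mul_inv, mul_inv, mul_inv, div_eq_mul_inv, inv_inv]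
    ring
  have hbase : ∀ x ∈ Set.Ioo (0:ℝ) 1, ∀ y ∈ Set.Ioo (0:ℝ) 1, |x - y| ≤ |φ x - φ y| := by
    rintro x ⟨hx0, hx1⟩ y ⟨hy0, hy1⟩
    have h1x : 0 < 1 - x := by linarith
    have h1y : 0 < 1 - y := by linarith
    have e : φ x - φ y = (x - y) / ((1-x)*(1-y)) := by
      rw [hφ]; dsimp only
      field_simp
      ring
    rw [e, abs_div, abs_of_pos (mul_pos h1x h1y), le_div_iff₀ (mul_pos h1x h1y)]
    nlinarith [abs_nonneg (x - y), mul_nonneg (abs_nonneg (x - y)) (by nlinarith : (0:ℝ) ≤ 1 - (1-x)*(1-y))]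
  have hψmem : ∀ z ∈ Set.Ioi (1:ℝ), ψ z ∈ Set.Ioo (0:ℝ) 1 := by
    intro z hz
    simp only [Set.mem_Ioi] at hz
    have hz0 : (0:ℝ) < z := by linarith
    rw [hψ]
    constructor
    · have : z⁻¹ < 1 := by rw [inv_lt_one_iff₀]; right; exact hz
      dsimp only; linarith
    · have : 0 < z⁻¹ := by positivity
      dsimp only; linarith
  have hψh1 : ∀ z ∈ Set.Ioi (1:ℝ), ψ (A1 * z + (1 - A1)) = f1 (ψ z) := by
    intro z hz
    simp only [Set.mem_Ioi] at hz
    rw [hψ, hf1, hA1def]; dsimp only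
    have hz0 : z ≠ 0 := ne_of_gt (by linarith)
    have h3 : a ≠ 0 := ne_of_gt ha0
    have hzinv : 0 < z⁻¹ := by positivity
    have hzinv1 : z⁻¹ < 1 := by rw [inv_lt_one_iff₀]; right; exact hz
    have h4 : a - (1 - z⁻¹) ≠ 0 := ne_of_gt (by linarith)
    have h5 : (a-1)/a * z + (1 - (a-1)/a) ≠ 0 := by
      have e : (a-1)/a * z + (1 - (a-1)/a) = ((a-1) * z + 1)/a := by field_simp; ring
      rw [e]
      apply div_ne_zero ?_ h3
      nlinarith
    have h6 : 1 + (a*z - z) ≠ 0 := by nlinarith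
    field_simp
    linear_combination (-1 : ℝ) * mul_inv_cancel₀ h6
  have hψh2 : ∀ z ∈ Set.Ioi (1:ℝ), ψ (A2 * z) = f2 (ψ z) := by
    intro z hz
    simp only [Set.mem_Ioi] at hz
    rw [hψ, hf2, hA2def]; dsimp only
    have hz0 : z ≠ 0 := ne_of_gt (by linarith)
    have h3 : b ≠ 0 := ne_of_gt hb0
    have h3' : b - 1 ≠ 0 := ne_of_gt (by linarith)
    have h5 : b/(b-1) * z ≠ 0 := by
      apply mul_ne_zero (div_ne_zero h3 h3') hz0
    field_simp
    ring
  -- existence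
  obtain ⟨ν0, hν0prob, hν0Ioi, hν0inv⟩ :=
    exists_inv p1 p2 A1 A2 hp1pos hp2pos hsum hA1pos hA2gt hrho
  haveI := hν0prob
  set μ0 : Measure ℝ := ν0.map ψ with hμ0def
  haveI hμ0prob : IsProbabilityMeasure μ0 := Measure.isProbabilityMeasure_map mψ.aemeasurable
  have hμ0Ioo : μ0 (Set.Ioo 0 1) = 1 := by
    rw [hμ0def, Measure.map_apply mψ measurableSet_Ioo]
    refine le_antisymm prob_le_one ?_
    rw [← hν0Ioi]
    exact measure_mono fun z hz => hψmem z hz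
  have hν0ae : ∀ᵐ z ∂ν0, z ∈ Set.Ioi (1:ℝ) := by
    rw [Filter.eventually_iff, mem_ae_iff]
    have hc : ν0 (Set.Ioi (1:ℝ))ᶜ = 0 := by
      rw [prob_compl_eq_one_sub measurableSet_Ioi, hν0Ioi, tsub_self]
    exact hc
  set h1f : ℝ → ℝ := fun z => A1 * z + (1 - A1) with hh1f
  set h2f : ℝ → ℝ := fun z => A2 * z with hh2f
  have mh1f : Measurable h1f := (measurable_id.const_mul A1).add_const _
  have mh2f : Measurable h2f := measurable_id.const_mul A2
  haveI hm1prob : IsProbabilityMeasure (ν0.map h1f) :=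
    Measure.isProbabilityMeasure_map mh1f.aemeasurable
  haveI hm2prob : IsProbabilityMeasure (ν0.map h2f) :=
    Measure.isProbabilityMeasure_map mh2f.aemeasurable
  haveI hfin1 : IsFiniteMeasure (ENNReal.ofReal p1 • ν0.map h1f) := by
    constructor
    rw [Measure.smul_apply, smul_eq_mul]
    exact ENNReal.mul_lt_top ENNReal.ofReal_lt_top (measure_lt_top _ _)
  haveI hfin2 : IsFiniteMeasure (ENNReal.ofReal p2 • ν0.map h2f) := by
    constructor
    rw [Measure.smul_apply, smul_eq_mul]
    exact ENNReal.mul_lt_top ENNReal.ofReal_lt_top (measure_lt_top _ _)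
  have hbddint : ∀ (G : ℝ → ℝ) (C : ℝ), Measurable G → (∀ x, |G x| ≤ C) →
      ∀ (m : Measure ℝ), IsFiniteMeasure m → Integrable G m := by
    intro G C mG hb m hm
    exact Integrable.mono' (integrable_const C) mG.aestronglyMeasurable
      (Filter.Eventually.of_forall fun x => by simpa [Real.norm_eq_abs] using hb x)
  have hμ0inv : ∀ g : ℝ → ℝ, Measurable g → (∃ C, ∀ x, |g x| ≤ C) →
      (∫ x, g x ∂μ0) = ∫ x, (p1 * g (f1 x) + p2 * g (f2 x)) ∂μ0 := by
    rintro g mg ⟨C, hC⟩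
    have mgψ : Measurable (g ∘ ψ) := mg.comp mψ
    have hgψb : ∀ z, |(g ∘ ψ) z| ≤ C := fun z => hC _
    have int1 : Integrable (g ∘ ψ) (ENNReal.ofReal p1 • ν0.map h1f) :=
      hbddint _ C mgψ hgψb _ hfin1
    have int2 : Integrable (g ∘ ψ) (ENNReal.ofReal p2 • ν0.map h2f) :=
      hbddint _ C mgψ hgψb _ hfin2
    have intA : Integrable (fun z => p1 * g (f1 (ψ z))) ν0 := by
      refine hbddint _ (p1 * C) (((mg.comp mf1).comp mψ).const_mul p1) (fun z => ?_) _ inferInstance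
      rw [abs_mul, abs_of_pos hp1pos]
      exact mul_le_mul_of_nonneg_left (hC _) hp1pos.le
    have intB : Integrable (fun z => p2 * g (f2 (ψ z))) ν0 := by
      refine hbddint _ (p2 * C) (((mg.comp mf2).comp mψ).const_mul p2) (fun z => ?_) _ inferInstance
      rw [abs_mul, abs_of_pos hp2pos]
      exact mul_le_mul_of_nonneg_left (hC _) hp2pos.le
    calc (∫ x, g x ∂μ0) = ∫ z, (g ∘ ψ) z ∂ν0 := by
          rw [hμ0def, integral_map mψ.aemeasurable mg.aestronglyMeasurable]; rfl
      _ = ∫ z, (g ∘ ψ) z ∂(ENNReal.ofReal p1 • ν0.map h1f + ENNReal.ofReal p2 • ν0.map h2f) := by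
          rw [← hν0inv]
      _ = (∫ z, (g ∘ ψ) z ∂(ENNReal.ofReal p1 • ν0.map h1f))
          + ∫ z, (g ∘ ψ) z ∂(ENNReal.ofReal p2 • ν0.map h2f) := integral_add_measure int1 int2
      _ = p1 * ∫ z, (g ∘ ψ) z ∂(ν0.map h1f) + p2 * ∫ z, (g ∘ ψ) z ∂(ν0.map h2f) := by
          rw [integral_smul_measure, integral_smul_measure,
            ENNReal.toReal_ofReal hp1pos.le, ENNReal.toReal_ofReal hp2pos.le,
            smul_eq_mul, smul_eq_mul]
      _ = p1 * ∫ z, g (ψ (h1f z)) ∂ν0 + p2 * ∫ z, g (ψ (h2f z)) ∂ν0 := by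
          rw [integral_map mh1f.aemeasurable mgψ.aestronglyMeasurable,
            integral_map mh2f.aemeasurable mgψ.aestronglyMeasurable]
          rfl
      _ = p1 * ∫ z, g (f1 (ψ z)) ∂ν0 + p2 * ∫ z, g (f2 (ψ z)) ∂ν0 := by
          congr 1
          · congr 1
            apply integral_congr_ae
            filter_upwards [hν0ae] with z hz
            exact congrArg g (hψh1 z hz)
          · congr 1
            apply integral_congr_ae
            filter_upwards [hν0ae] with z hz
            exact congrArg g (hψh2 z hz)
      _ = ∫ z, (p1 * g (f1 (ψ z)) + p2 * g (f2 (ψ z))) ∂ν0 := by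
          rw [integral_add intA intB, integral_const_mul, integral_const_mul]
      _ = ∫ x, (p1 * g (f1 x) + p2 * g (f2 x)) ∂μ0 := by
          rw [hμ0def, integral_map mψ.aemeasurable]
          exact (((mg.comp mf1).const_mul p1).add ((mg.comp mf2).const_mul p2)).aestronglyMeasurable
  -- uniqueness
  set ρ : ℝ := p1 * Real.sqrt A1 + p2 * Real.sqrt A2 with hρdef
  have hρnn : 0 ≤ ρ := by
    rw [hρdef]
    have := Real.sqrt_nonneg A1
    have := Real.sqrt_nonneg A2
    positivity
  set D : ℝ → ℝ → ℝ := fun x y => Real.sqrt |φ x - φ y| with hDdef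
  set Pop : (ℝ → ℝ) → ℝ → ℝ := fun G x => p1 * G (f1 x) + p2 * G (f2 x) with hPop
  have hDnn : ∀ x y, 0 ≤ D x y := fun x y => Real.sqrt_nonneg _
  have hD1 : ∀ x ∈ Set.Ioo (0:ℝ) 1, ∀ y ∈ Set.Ioo (0:ℝ) 1,
      D (f1 x) (f1 y) = Real.sqrt A1 * D x y := by
    intro x hx y hy
    rw [hDdef]; dsimp only
    rw [hconj1 x hx, hconj1 y hy,
      show A1 * φ x + (1 - A1) - (A1 * φ y + (1 - A1)) = A1 * (φ x - φ y) by ring,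
      abs_mul, abs_of_pos hA1pos, Real.sqrt_mul hA1pos.le]
  have hD2 : ∀ x ∈ Set.Ioo (0:ℝ) 1, ∀ y ∈ Set.Ioo (0:ℝ) 1,
      D (f2 x) (f2 y) = Real.sqrt A2 * D x y := by
    intro x hx y hy
    rw [hDdef]; dsimp only
    rw [hconj2 x hx, hconj2 y hy,
      show A2 * φ x - A2 * φ y = A2 * (φ x - φ y) by ring,
      abs_mul, abs_of_pos (by linarith), Real.sqrt_mul (by linarith)]
  have hstep : ∀ (G : ℝ → ℝ) (C L : ℝ), Measurable G → (∀ x, |G x| ≤ C) →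
      (∀ x ∈ Set.Ioo (0:ℝ) 1, ∀ y ∈ Set.Ioo (0:ℝ) 1, |G x - G y| ≤ L * D x y) →
      Measurable (Pop G) ∧ (∀ x, |Pop G x| ≤ C) ∧
      (∀ x ∈ Set.Ioo (0:ℝ) 1, ∀ y ∈ Set.Ioo (0:ℝ) 1,
        |Pop G x - Pop G y| ≤ (ρ * L) * D x y) := by
    intro G C L mG hb hl
    refine ⟨((mG.comp mf1).const_mul p1).add ((mG.comp mf2).const_mul p2), fun x => ?_, ?_⟩
    · rw [hPop]; dsimp only
      calc |p1 * G (f1 x) + p2 * G (f2 x)|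
          ≤ |p1 * G (f1 x)| + |p2 * G (f2 x)| := abs_add_le _ _
        _ = p1 * |G (f1 x)| + p2 * |G (f2 x)| := by
            rw [abs_mul, abs_mul, abs_of_pos hp1pos, abs_of_pos hp2pos]
        _ ≤ p1 * C + p2 * C := add_le_add
            (mul_le_mul_of_nonneg_left (hb _) hp1pos.le)
            (mul_le_mul_of_nonneg_left (hb _) hp2pos.le)
        _ = C := by rw [← add_mul, hsum, one_mul]
    · intro x hx y hy
      have e : Pop G x - Pop G y
          = p1 * (G (f1 x) - G (f1 y)) + p2 * (G (f2 x) - G (f2 y)) := by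
        rw [hPop]; dsimp only; ring
      have b1 : |G (f1 x) - G (f1 y)| ≤ L * (Real.sqrt A1 * D x y) := by
        rw [← hD1 x hx y hy]; exact hl _ (hmem1 x hx) _ (hmem1 y hy)
      have b2 : |G (f2 x) - G (f2 y)| ≤ L * (Real.sqrt A2 * D x y) := by
        rw [← hD2 x hx y hy]; exact hl _ (hmem2 x hx) _ (hmem2 y hy)
      calc |Pop G x - Pop G y|
          ≤ p1 * |G (f1 x) - G (f1 y)| + p2 * |G (f2 x) - G (f2 y)| := by
            rw [e]
            refine le_trans (abs_add_le _ _) ?_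
            rw [abs_mul, abs_mul, abs_of_pos hp1pos, abs_of_pos hp2pos]
        _ ≤ p1 * (L * (Real.sqrt A1 * D x y)) + p2 * (L * (Real.sqrt A2 * D x y)) :=
            add_le_add (mul_le_mul_of_nonneg_left b1 hp1pos.le)
              (mul_le_mul_of_nonneg_left b2 hp2pos.le)
        _ = (ρ * L) * D x y := by rw [hρdef]; ring
  have hiter : ∀ (G : ℝ → ℝ) (C L : ℝ), Measurable G → (∀ x, |G x| ≤ C) →
      (∀ x ∈ Set.Ioo (0:ℝ) 1, ∀ y ∈ Set.Ioo (0:ℝ) 1, |G x - G y| ≤ L * D x y) → ∀ n : ℕ,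
      Measurable (Pop^[n] G) ∧ (∀ x, |Pop^[n] G x| ≤ C) ∧
      (∀ x ∈ Set.Ioo (0:ℝ) 1, ∀ y ∈ Set.Ioo (0:ℝ) 1,
        |Pop^[n] G x - Pop^[n] G y| ≤ (ρ ^ n * L) * D x y) := by
    intro G C L mG hb hl n
    induction n with
    | zero =>
      refine ⟨by simpa using mG, by simpa using hb, ?_⟩
      intro x hx y hy
      simpa using hl x hx y hy
    | succ n ih =>
      obtain ⟨m1, b1, l1⟩ := ih
      obtain ⟨m2, b2, l2⟩ := hstep _ C _ m1 b1 l1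
      rw [Function.iterate_succ_apply']
      refine ⟨m2, b2, ?_⟩
      intro x hx y hy
      calc |Pop (Pop^[n] G) x - Pop (Pop^[n] G) y|
          ≤ (ρ * (ρ^n * L)) * D x y := l2 x hx y hy
        _ = (ρ^(n+1) * L) * D x y := by ring
  have hinviter : ∀ (m : Measure ℝ), IsProbabilityMeasure m →
      (∀ g : ℝ → ℝ, Measurable g → (∃ C, ∀ x, |g x| ≤ C) →
        (∫ x, g x ∂m) = ∫ x, (p1 * g (f1 x) + p2 * g (f2 x)) ∂m) →
      ∀ (G : ℝ → ℝ) (C L : ℝ), Measurable G → (∀ x, |G x| ≤ C) →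
      (∀ x ∈ Set.Ioo (0:ℝ) 1, ∀ y ∈ Set.Ioo (0:ℝ) 1, |G x - G y| ≤ L * D x y) →
      ∀ n : ℕ, (∫ x, G x ∂m) = ∫ x, Pop^[n] G x ∂m := by
    intro m hPm hIm G C L mG hb hl n
    induction n with
    | zero => simp
    | succ n ih =>
      obtain ⟨mn, bn, _⟩ := hiter G C L mG hb hl n
      rw [ih, Function.iterate_succ_apply']
      exact hIm (Pop^[n] G) mn ⟨C, bn⟩
  have huni : ∀ μ' ν' : Measure ℝ,
      (IsProbabilityMeasure μ' ∧ μ' (Set.Ioo (0:ℝ) 1) = 1 ∧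
        (∀ g : ℝ → ℝ, Measurable g → (∃ C, ∀ x, |g x| ≤ C) →
          (∫ x, g x ∂μ') = ∫ x, (p1 * g (f1 x) + p2 * g (f2 x)) ∂μ')) →
      (IsProbabilityMeasure ν' ∧ ν' (Set.Ioo (0:ℝ) 1) = 1 ∧
        (∀ g : ℝ → ℝ, Measurable g → (∃ C, ∀ x, |g x| ≤ C) →
          (∫ x, g x ∂ν') = ∫ x, (p1 * g (f1 x) + p2 * g (f2 x)) ∂ν')) →
      μ' = ν' := by
    rintro μ' ν' ⟨hPμ, hSμ, hIμ⟩ ⟨hPν, hSν, hIν⟩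
    haveI := hPμ; haveI := hPν
    have hprodae : ∀ᵐ q ∂(μ'.prod ν'),
        q.1 ∈ Set.Ioo (0:ℝ) 1 ∧ q.2 ∈ Set.Ioo (0:ℝ) 1 := by
      rw [Filter.eventually_iff, mem_ae_iff]
      have hμc : μ' (Set.Ioo (0:ℝ) 1)ᶜ = 0 := by
        rw [prob_compl_eq_one_sub measurableSet_Ioo, hSμ, tsub_self]
      have hνc : ν' (Set.Ioo (0:ℝ) 1)ᶜ = 0 := by
        rw [prob_compl_eq_one_sub measurableSet_Ioo, hSν, tsub_self]
      have hset : {q : ℝ × ℝ | q.1 ∈ Set.Ioo (0:ℝ) 1 ∧ q.2 ∈ Set.Ioo (0:ℝ) 1}ᶜ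
          ⊆ ((Set.Ioo (0:ℝ) 1)ᶜ ×ˢ (Set.univ : Set ℝ))
            ∪ ((Set.univ : Set ℝ) ×ˢ (Set.Ioo (0:ℝ) 1)ᶜ) := by
        intro q hq
        simp only [Set.mem_compl_iff, Set.mem_setOf_eq, not_and_or] at hq
        rcases hq with h | h
        · left; exact ⟨h, trivial⟩
        · right; exact ⟨trivial, h⟩
      refine measure_mono_null hset (measure_union_null ?_ ?_)
      · rw [Measure.prod_prod, hμc, zero_mul]
      · rw [Measure.prod_prod, hνc, mul_zero]
    have hgeq : ∀ (g : ℝ → ℝ) (C L : ℝ), 0 ≤ C → 0 ≤ L → Measurable g →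
        (∀ x, |g x| ≤ C) → (∀ x y, |g x - g y| ≤ L * |x - y|) →
        (∫ x, g x ∂μ') = ∫ x, g x ∂ν' := by
      intro g C L hC hL mg hb hlip
      set L0 : ℝ := Real.sqrt (2 * L * C) with hL0
      have hL0nn : 0 ≤ L0 := Real.sqrt_nonneg _
      have hgD : ∀ x ∈ Set.Ioo (0:ℝ) 1, ∀ y ∈ Set.Ioo (0:ℝ) 1,
          |g x - g y| ≤ L0 * D x y := by
        intro x hx y hy
        have h1 : |g x - g y| ≤ min (L * |φ x - φ y|) (2*C) := by
          refine le_min (le_trans (hlip x y) ?_) ?_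
          · exact mul_le_mul_of_nonneg_left (hbase x hx y hy) hL
          · calc |g x - g y| ≤ |g x| + |g y| := abs_sub _ _
              _ ≤ C + C := add_le_add (hb x) (hb y)
              _ = 2*C := by ring
        have h2 : Real.sqrt ((L * |φ x - φ y|) * (2*C)) = L0 * D x y := by
          rw [show (L * |φ x - φ y|) * (2*C) = (2*L*C) * |φ x - φ y| by ring,
            Real.sqrt_mul (by positivity), hL0, hDdef]
        exact le_trans h1 (le_trans
          (min_le_sqrt_mul _ _ (by positivity) (by positivity)) (le_of_eq h2))
      have hbound : ∀ n : ℕ, |(∫ x, g x ∂μ') - ∫ x, g x ∂ν'|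
          ≤ ∫ q, min ((ρ^n * L0) * D q.1 q.2) (2*C) ∂(μ'.prod ν') := by
        intro n
        obtain ⟨mn, bn, ln⟩ := hiter g C L0 mg hb hgD n
        rw [hinviter μ' hPμ hIμ g C L0 mg hb hgD n, hinviter ν' hPν hIν g C L0 mg hb hgD n]
        have int1 : Integrable (fun q : ℝ × ℝ => Pop^[n] g q.1) (μ'.prod ν') :=
          Integrable.mono' (integrable_const C) (mn.comp measurable_fst).aestronglyMeasurable
            (Filter.Eventually.of_forall fun q => by
              simpa [Real.norm_eq_abs] using bn q.1)
        have int2 : Integrable (fun q : ℝ × ℝ => Pop^[n] g q.2) (μ'.prod ν') :=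
          Integrable.mono' (integrable_const C) (mn.comp measurable_snd).aestronglyMeasurable
            (Filter.Eventually.of_forall fun q => by
              simpa [Real.norm_eq_abs] using bn q.2)
        have mD : Measurable (fun q : ℝ × ℝ => D q.1 q.2) := by
          rw [hDdef]
          exact Real.continuous_sqrt.measurable.comp
            ((mφ.comp measurable_fst).sub (mφ.comp measurable_snd)).abs
        have hminnn : ∀ q : ℝ × ℝ, 0 ≤ min ((ρ^n * L0) * D q.1 q.2) (2*C) := by
          intro q
          exact le_min (mul_nonneg (mul_nonneg (pow_nonneg hρnn n) hL0nn) (hDnn _ _))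
            (by positivity)
        have intmin : Integrable (fun q : ℝ × ℝ => min ((ρ^n * L0) * D q.1 q.2) (2*C))
            (μ'.prod ν') := by
          refine Integrable.mono' (integrable_const (2*C))
            ((mD.const_mul _).min measurable_const).aestronglyMeasurable
            (Filter.Eventually.of_forall fun q => ?_)
          rw [Real.norm_eq_abs, abs_of_nonneg (hminnn q)]
          exact min_le_right _ _
        have heq : (∫ x, Pop^[n] g x ∂μ') - ∫ x, Pop^[n] g x ∂ν'
            = ∫ q, (Pop^[n] g q.1 - Pop^[n] g q.2) ∂(μ'.prod ν') := by
          rw [integral_sub int1 int2, integral_fun_fst (f := Pop^[n] g),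
            integral_fun_snd (f := Pop^[n] g)]
          simp
        rw [heq]
        refine le_trans ?_ (integral_mono_ae (int1.sub int2).abs intmin ?_)
        · have := norm_integral_le_integral_norm
            (μ := μ'.prod ν') (fun q : ℝ × ℝ => Pop^[n] g q.1 - Pop^[n] g q.2)
          simpa [Real.norm_eq_abs] using this
        · filter_upwards [hprodae] with q hq
          refine le_min (ln q.1 hq.1 q.2 hq.2) ?_
          calc |Pop^[n] g q.1 - Pop^[n] g q.2|
              ≤ |Pop^[n] g q.1| + |Pop^[n] g q.2| := abs_sub _ _
            _ ≤ C + C := add_le_add (bn q.1) (bn q.2)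
            _ = 2*C := by ring
      have mD : Measurable (fun q : ℝ × ℝ => D q.1 q.2) := by
        rw [hDdef]
        exact Real.continuous_sqrt.measurable.comp
          ((mφ.comp measurable_fst).sub (mφ.comp measurable_snd)).abs
      have hlim : Tendsto (fun n : ℕ => ∫ q, min ((ρ^n * L0) * D q.1 q.2) (2*C)
          ∂(μ'.prod ν')) atTop (𝓝 0) := by
        have h0 : (0:ℝ) = ∫ (_ : ℝ × ℝ), (0:ℝ) ∂(μ'.prod ν') := by simp
        rw [h0]
        apply tendsto_integral_of_dominated_convergence (fun _ => 2*C)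
        · intro n
          exact ((mD.const_mul _).min measurable_const).aestronglyMeasurable
        · exact integrable_const _
        · intro n
          filter_upwards with q
          rw [Real.norm_eq_abs, abs_of_nonneg (le_min
            (mul_nonneg (mul_nonneg (pow_nonneg hρnn n) hL0nn) (hDnn _ _)) (by positivity))]
          exact min_le_right _ _
        · filter_upwards with q
          apply squeeze_zero (fun n => le_min
            (mul_nonneg (mul_nonneg (pow_nonneg hρnn n) hL0nn) (hDnn _ _)) (by positivity))
            (fun n => min_le_left _ _)
          have hpow : Tendsto (fun n : ℕ => ρ^n) atTop (𝓝 0) :=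
            tendsto_pow_atTop_nhds_zero_of_lt_one hρnn hrho
          have := hpow.mul_const (L0 * D q.1 q.2)
          simpa [mul_assoc] using this
      have habs := ge_of_tendsto hlim (Filter.Eventually.of_forall hbound)
      have hnn := abs_nonneg ((∫ x, g x ∂μ') - ∫ x, g x ∂ν')
      have hzero : (∫ x, g x ∂μ') - ∫ x, g x ∂ν' = 0 :=
        abs_eq_zero.mp (le_antisymm habs hnn)
      linarith
    apply Measure.ext_of_Iic
    intro t
    set gk : ℕ → ℝ → ℝ := fun k x => min 1 (max 0 (1 - ((k:ℝ)+1) * (x - t))) with hgk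
    have mgk : ∀ k, Measurable (gk k) := by
      intro k
      apply Measurable.min measurable_const
      apply Measurable.max measurable_const
      exact ((measurable_id.sub_const t).const_mul _).const_sub 1
    have hgkb : ∀ k x, |gk k x| ≤ 1 := by
      intro k x
      rw [hgk]; dsimp only
      rw [abs_le]
      refine ⟨?_, min_le_left _ _⟩
      have h0 : (0:ℝ) ≤ min 1 (max 0 (1 - ((k:ℝ)+1) * (x - t))) :=
        le_min one_pos.le (le_max_left _ _)
      linarith
    have m1lem : ∀ u v : ℝ, |min 1 u - min 1 v| ≤ |u - v| := by
      intro u v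
      have := abs_min_sub_min_le_max (1:ℝ) u 1 v
      simpa using this
    have m2lem : ∀ u v : ℝ, |max 0 u - max 0 v| ≤ |u - v| := by
      intro u v
      have := abs_max_sub_max_le_abs u v 0
      simpa [max_comm] using this
    have hgkl : ∀ k, ∀ x y : ℝ, |gk k x - gk k y| ≤ ((k:ℝ)+1) * |x - y| := by
      intro k x y
      rw [hgk]; dsimp only
      refine le_trans (m1lem _ _) (le_trans (m2lem _ _) ?_)
      rw [show (1 - ((k:ℝ)+1) * (x - t)) - (1 - ((k:ℝ)+1) * (y - t))
          = ((k:ℝ)+1) * (y - x) by ring, abs_mul, abs_of_pos (by positivity), abs_sub_comm]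
    have heqk : ∀ k, (∫ x, gk k x ∂μ') = ∫ x, gk k x ∂ν' :=
      fun k => hgeq (gk k) 1 ((k:ℝ)+1) one_pos.le (by positivity) (mgk k) (hgkb k) (hgkl k)
    have hpt : ∀ x : ℝ, Tendsto (fun k => gk k x) atTop
        (𝓝 (Set.indicator (Set.Iic t) (fun _ => (1:ℝ)) x)) := by
      intro x
      rcases le_or_gt x t with hx | hx
      · have hval : ∀ k : ℕ, gk k x = 1 := by
          intro k
          rw [hgk]; dsimp only
          have hk0 : (0:ℝ) ≤ (k:ℝ) := Nat.cast_nonneg k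
          have h1 : (1:ℝ) ≤ 1 - ((k:ℝ)+1) * (x - t) := by nlinarith
          rw [max_eq_right (by linarith), min_eq_left h1]
        rw [Set.indicator_of_mem (Set.mem_Iic.mpr hx)]
        simp only [hval]
        exact tendsto_const_nhds
      · have hev : ∀ᶠ k : ℕ in atTop, gk k x = 0 := by
          filter_upwards [eventually_ge_atTop ⌈1/(x - t)⌉₊] with k hk
          rw [hgk]; dsimp only
          have h1 : 1/(x-t) ≤ (k:ℝ) := le_trans (Nat.le_ceil _) (Nat.cast_le.mpr hk)
          have hxt : x - t ≠ 0 := ne_of_gt (by linarith)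
          have h3 : 1/(x-t) * (x - t) = 1 := one_div_mul_cancel hxt
          have h2 : 1 - ((k:ℝ)+1) * (x - t) ≤ 0 := by nlinarith
          rw [max_eq_left h2, min_eq_right one_pos.le]
        rw [Set.indicator_of_notMem (by simpa [Set.mem_Iic] using hx)]
        exact Tendsto.congr' (hev.mono fun k hk => hk.symm) tendsto_const_nhds
    have hlimμ : Tendsto (fun k => ∫ x, gk k x ∂μ') atTop
        (𝓝 ((μ' (Set.Iic t)).toReal)) := by
      have h := tendsto_integral_of_dominated_convergence (μ := μ') (fun _ => (1:ℝ))
        (fun k => (mgk k).aestronglyMeasurable) (integrable_const 1)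
        (fun k => Filter.Eventually.of_forall fun x => by
          simpa [Real.norm_eq_abs] using hgkb k x)
        (Filter.Eventually.of_forall hpt)
      rwa [integral_indicator_const (1:ℝ) measurableSet_Iic, smul_eq_mul, mul_one] at h
    have hlimν : Tendsto (fun k => ∫ x, gk k x ∂ν') atTop
        (𝓝 ((ν' (Set.Iic t)).toReal)) := by
      have h := tendsto_integral_of_dominated_convergence (μ := ν') (fun _ => (1:ℝ))
        (fun k => (mgk k).aestronglyMeasurable) (integrable_const 1)
        (fun k => Filter.Eventually.of_forall fun x => by
          simpa [Real.norm_eq_abs] using hgkb k x)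
        (Filter.Eventually.of_forall hpt)
      rwa [integral_indicator_const (1:ℝ) measurableSet_Iic, smul_eq_mul, mul_one] at h
    have heq := tendsto_nhds_unique (hlimμ.congr heqk) hlimν
    exact (ENNReal.toReal_eq_toReal_iff' (measure_ne_top _ _) (measure_ne_top _ _)).mp heq
  refine ⟨μ0, ⟨hμ0prob, hμ0Ioo, hμ0inv⟩, ?_⟩
  intro ν hν
  exact huni ν μ0 hν ⟨hμ0prob, hμ0Ioo, hμ0inv⟩
end
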